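/- Let z be a real-valued random variable whose distribution is symmetric about 0, and let a ∈ ℝ and b > 0. Then |E[(a+z) - (a+z)·b / max(|a+z|, b)]| ≤ 2|a| · P(z > b - |a|). -/

import Mathlib

open MeasureTheory
open scoped ENNReal

/-- For a real random variable `z` symmetric about 0, `a : ℝ` and `b > 0`,
`|E[(a+z) - (a+z)·b / max(|a+z|, b)]| ≤ 2|a| · P(z > b - |a|)`. -/
theorem clipped_bias_aux {Ω : Type*} [MeasurableSpace Ω] (μ : Measure Ω)
    [IsProbabilityMeasure μ] (z : Ω → ℝ) (hz : Integrable z μ) (hzm : AEMeasurable z μ)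
    (hsym : Measure.map z μ = Measure.map (fun ω => -z ω) μ)
    (a b : ℝ) (hb : 0 < b) :
    |∫ ω, ((a + z ω) - (a + z ω) * b / max |a + z ω| b) ∂μ|
      ≤ 2 * |a| * (μ {ω | b - |a| < z ω}).toReal := by
  set t : ℝ := b - |a| with ht
  set f : ℝ → ℝ := fun x => x - x * b / max |x| b with hfdef
  -- clip formula
  have hclip : ∀ x : ℝ, x * b / max |x| b = max (-b) (min b x) := by
    intro x
    rcases le_total |x| b with h | h
    · rw [max_eq_right h, mul_div_assoc, div_self hb.ne', mul_one]
      rw [abs_le] at h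
      rw [min_eq_right h.2, max_eq_right h.1]
    · rw [max_eq_left h]
      rcases abs_cases x with ⟨h1, h2⟩ | ⟨h1, h2⟩
      · have hx : x ≠ 0 := by rw [h1] at h; exact (hb.trans_le h).ne'
        rw [h1, mul_div_cancel_left₀ b hx, min_eq_left (by rw [h1] at h; linarith),
          max_eq_right (by linarith)]
      · have hx : x ≠ 0 := by intro hx0; rw [hx0] at h1; simp at h1; linarith
        rw [h1, div_neg, mul_div_cancel_left₀ b hx, min_eq_right (by linarith),
          max_eq_left (by rw [h1] at h; linarith)]
  have hfeq : ∀ x : ℝ, f x = x - max (-b) (min b x) := by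
    intro x; simp only [hfdef, hclip]
  -- piecewise formula
  have hcase : ∀ x : ℝ, f x = if b ≤ x then x - b else if x ≤ -b then x + b else 0 := by
    intro x
    rw [hfeq]
    split_ifs with h1 h2
    · rw [min_eq_left h1, max_eq_right (by linarith)]
    · rw [min_eq_right (by linarith), max_eq_left h2]; ring
    · push_neg at h1 h2
      rw [min_eq_right h1.le, max_eq_right (by linarith), sub_self]
  -- 1-Lipschitz in the weak sense
  have key : ∀ x y : ℝ, |f x - f y| ≤ |x - y| := by
    intro x y
    rw [hcase, hcase, abs_le]
    rcases abs_cases (x - y) with ⟨e,e'⟩|⟨e,e'⟩ <;> rw [e] <;>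
      split_ifs <;> constructor <;> linarith
  have hf0 : ∀ x : ℝ, |x| ≤ b → f x = 0 := by
    intro x hx
    rw [abs_le] at hx
    rw [hfeq, min_eq_right hx.2, max_eq_right hx.1, sub_self]
  have hfabs : ∀ x : ℝ, |f x| ≤ |x| := by
    intro x
    have h0 : f 0 = 0 := hf0 0 (by simp [hb.le])
    simpa [h0] using key x 0
  have hfodd : ∀ x : ℝ, f (-x) = - f x := by
    intro x
    simp only [hfdef, abs_neg]
    ring
  have hfc : Continuous f := by
    rw [hfdef]
    exact continuous_id.sub ((continuous_id.mul continuous_const).div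
      (continuous_abs.max continuous_const) (fun x => (lt_max_of_lt_right hb).ne'))
  -- integrability
  have hasm1 : AEStronglyMeasurable (fun ω => f (a + z ω)) μ :=
    (hfc.measurable.comp_aemeasurable (aemeasurable_const.add hzm)).aestronglyMeasurable
  have hasm2 : AEStronglyMeasurable (fun ω => f (a - z ω)) μ :=
    (hfc.measurable.comp_aemeasurable (aemeasurable_const.sub hzm)).aestronglyMeasurable
  have hbound : Integrable (fun ω => |a| + |z ω|) μ := (integrable_const |a|).add hz.abs
  have hint1 : Integrable (fun ω => f (a + z ω)) μ := by
    refine hbound.mono' hasm1 ?_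
    filter_upwards with ω
    calc ‖f (a + z ω)‖ = |f (a + z ω)| := rfl
      _ ≤ |a + z ω| := hfabs _
      _ ≤ |a| + |z ω| := abs_add_le _ _
  have hint2 : Integrable (fun ω => f (a - z ω)) μ := by
    refine hbound.mono' hasm2 ?_
    filter_upwards with ω
    calc ‖f (a - z ω)‖ = |f (a - z ω)| := rfl
      _ ≤ |a - z ω| := hfabs _
      _ ≤ |a| + |z ω| := by
          rw [sub_eq_add_neg]
          simpa using abs_add_le a (-z ω)
  -- symmetry of the integral
  have hsi : ∫ ω, f (a + z ω) ∂μ = ∫ ω, f (a - z ω) ∂μ := by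
    have hg : AEStronglyMeasurable (fun x : ℝ => f (a + x)) (Measure.map z μ) :=
      (hfc.comp (continuous_const.add continuous_id)).aestronglyMeasurable
    have hg' : AEStronglyMeasurable (fun x : ℝ => f (a + x))
        (Measure.map (fun ω => -z ω) μ) := by rw [← hsym]; exact hg
    calc ∫ ω, f (a + z ω) ∂μ = ∫ x, f (a + x) ∂(Measure.map z μ) :=
          (integral_map hzm hg).symm
      _ = ∫ x, f (a + x) ∂(Measure.map (fun ω => -z ω) μ) := by rw [hsym]
      _ = ∫ ω, f (a + -z ω) ∂μ := integral_map hzm.neg hg'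
      _ = ∫ ω, f (a - z ω) ∂μ := by simp [sub_eq_add_neg]
  -- indicator bound
  set S : Set ℝ := {x | t < |x|} with hSdef
  have hS : MeasurableSet S := measurableSet_lt measurable_const measurable_abs
  set h : Ω → ℝ := fun ω => 2 * |a| * S.indicator (fun _ => (1:ℝ)) (z ω) with hhdef
  have hptwise : ∀ ω, |f (a + z ω) + f (a - z ω)| ≤ h ω := by
    intro ω
    simp only [hhdef]
    by_cases hω : z ω ∈ S
    · rw [Set.indicator_of_mem hω]
      have hodd : f (a - z ω) = - f (z ω - a) := by
        rw [show z ω - a = -(a - z ω) by ring, hfodd]; ring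
      calc |f (a + z ω) + f (a - z ω)| = |f (a + z ω) - f (z ω - a)| := by rw [hodd]; ring_nf
        _ ≤ |(a + z ω) - (z ω - a)| := key _ _
        _ = |2 * a| := by ring_nf
        _ = 2 * |a| := by rw [abs_mul]; simp
        _ ≤ 2 * |a| * 1 := by rw [mul_one]
    · rw [Set.indicator_of_notMem hω]
      have hz' : |z ω| ≤ t := not_lt.1 hω
      have h1 : |a + z ω| ≤ b := by
        calc |a + z ω| ≤ |a| + |z ω| := abs_add_le _ _
          _ ≤ b := by rw [ht] at hz'; linarith
      have h2 : |a - z ω| ≤ b := by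
        calc |a - z ω| ≤ |a| + |z ω| := by
              rw [sub_eq_add_neg]; simpa using abs_add_le a (-z ω)
          _ ≤ b := by rw [ht] at hz'; linarith
      rw [hf0 _ h1, hf0 _ h2]
      simp
  have hindm : AEStronglyMeasurable (fun ω => S.indicator (fun _ => (1:ℝ)) (z ω)) μ :=
    ((measurable_const.indicator hS).comp_aemeasurable hzm).aestronglyMeasurable
  have hinth : Integrable h μ := by
    refine (integrable_const (2 * |a|)).mono' (hindm.const_mul _) ?_
    filter_upwards with ω
    simp only [hhdef]
    rw [Real.norm_eq_abs, Set.indicator_apply]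
    split_ifs
    · rw [mul_one, abs_of_nonneg (by positivity)]
    · rw [mul_zero, abs_zero]; positivity
  have hinteg_h : ∫ ω, h ω ∂μ = 2 * |a| * ((Measure.map z μ) S).toReal := by
    simp only [hhdef]
    rw [MeasureTheory.integral_const_mul]
    congr 1
    have hindSM : AEStronglyMeasurable (fun x : ℝ => S.indicator (fun _ => (1:ℝ)) x)
        (Measure.map z μ) := (measurable_const.indicator hS).aestronglyMeasurable
    rw [← integral_map hzm hindSM, integral_indicator_const _ hS]
    simp [Measure.real]
  -- tail bound
  have htail : (Measure.map z μ) S ≤ 2 * μ {ω | t < z ω} := by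
    have hsub : S ⊆ Set.Ioi t ∪ Set.Iio (-t) := by
      intro x hx
      rw [hSdef] at hx
      simp only [Set.mem_setOf_eq] at hx
      rcases abs_cases x with ⟨e, _⟩ | ⟨e, _⟩
      · left; rw [Set.mem_Ioi]; linarith [e ▸ hx]
      · right; rw [Set.mem_Iio]; linarith [e ▸ hx]
    have h1 : (Measure.map z μ) (Set.Ioi t) = μ {ω | t < z ω} := by
      rw [Measure.map_apply_of_aemeasurable hzm measurableSet_Ioi]
      rfl
    have h2 : (Measure.map z μ) (Set.Iio (-t)) = μ {ω | t < z ω} := by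
      rw [hsym, Measure.map_apply_of_aemeasurable
        (show AEMeasurable (fun ω => -z ω) μ from hzm.neg) measurableSet_Iio]
      congr 1
      ext ω
      simp only [Set.mem_preimage, Set.mem_Iio, Set.mem_setOf_eq]
      constructor <;> intro <;> linarith
    calc (Measure.map z μ) S ≤ (Measure.map z μ) (Set.Ioi t ∪ Set.Iio (-t)) :=
          measure_mono hsub
      _ ≤ (Measure.map z μ) (Set.Ioi t) + (Measure.map z μ) (Set.Iio (-t)) :=
          measure_union_le _ _
      _ = 2 * μ {ω | t < z ω} := by rw [h1, h2, two_mul]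
  -- assemble
  have hgint : ∫ ω, (f (a + z ω) + f (a - z ω)) ∂μ = 2 * ∫ ω, f (a + z ω) ∂μ := by
    rw [integral_add hint1 hint2, ← hsi, two_mul]
  have habs_int : |∫ ω, (f (a + z ω) + f (a - z ω)) ∂μ| ≤ ∫ ω, h ω ∂μ := by
    calc |∫ ω, (f (a + z ω) + f (a - z ω)) ∂μ|
        ≤ ∫ ω, |f (a + z ω) + f (a - z ω)| ∂μ := by
          simpa [Real.norm_eq_abs] using
            norm_integral_le_integral_norm (μ := μ) (fun ω => f (a + z ω) + f (a - z ω))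
      _ ≤ ∫ ω, h ω ∂μ := integral_mono (hint1.add hint2).abs hinth hptwise
  have hfin : (Measure.map z μ) S ≠ ⊤ := by
    rw [hsym] at *
    exact measure_ne_top _ _
  have htoReal : ((Measure.map z μ) S).toReal ≤ 2 * (μ {ω | t < z ω}).toReal := by
    have h2fin : (2 : ℝ≥0∞) * μ {ω | t < z ω} ≠ ⊤ :=
      ENNReal.mul_ne_top (by norm_num) (measure_ne_top _ _)
    have := ENNReal.toReal_le_toReal hfin h2fin |>.mpr htail
    rwa [ENNReal.toReal_mul, ENNReal.toReal_ofNat] at this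
  show |∫ ω, f (a + z ω) ∂μ| ≤ 2 * |a| * (μ {ω | t < z ω}).toReal
  have h2 : 2 * |∫ ω, f (a + z ω) ∂μ| ≤ 2 * |a| * ((Measure.map z μ) S).toReal := by
    calc 2 * |∫ ω, f (a + z ω) ∂μ| = |2 * ∫ ω, f (a + z ω) ∂μ| := by
          rw [abs_mul]; simp
      _ = |∫ ω, (f (a + z ω) + f (a - z ω)) ∂μ| := by rw [hgint]
      _ ≤ ∫ ω, h ω ∂μ := habs_int
      _ = 2 * |a| * ((Measure.map z μ) S).toReal := hinteg_h
  nlinarith [abs_nonneg a, ENNReal.toReal_nonneg (a := (Measure.map z μ) S), htoReal,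
    ENNReal.toReal_nonneg (a := μ {ω | t < z ω})]
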